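/- For |x| < 1 and any y, e_q(x) · E_q(y) = ∑_{n=0}^∞ (x ⊕_q y)^n / (q;q)_n, where (x ⊕_q y)^n is the Hahn q-addition power. -/

import Mathlib

open Finset Filter

noncomputable def qPochGen (Q a : ℝ) (n : ℕ) : ℝ := ∏ j ∈ Finset.range n, (1 - a * Q ^ j)

noncomputable def qPoch (q : ℝ) (n : ℕ) : ℝ := qPochGen q q n

/-- Hahn q-addition power (x ⊕_q y)^n -/
noncomputable def hahnAdd (q x y : ℝ) (n : ℕ) : ℝ :=
  qPoch q n * ∑ k ∈ Finset.range (n + 1),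
    q ^ (k * (k - 1) / 2) * x ^ (n - k) * y ^ k / (qPoch q k * qPoch q (n - k))

lemma qPoch_pos {q : ℝ} (hq : 0 < q) (hq1 : q < 1) (n : ℕ) : 0 < qPoch q n := by
  unfold qPoch qPochGen
  apply Finset.prod_pos
  intro j _
  have h1 : q * q ^ j ≤ q * 1 := by
    apply mul_le_mul_of_nonneg_left _ hq.le
    exact pow_le_one₀ hq.le hq1.le
  linarith

lemma qPoch_succ {q : ℝ} (n : ℕ) : qPoch q (n + 1) = qPoch q n * (1 - q * q ^ n) := by
  simp [qPoch, qPochGen, Finset.prod_range_succ]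

lemma qfac_pos {q : ℝ} (hq : 0 < q) (hq1 : q < 1) (n : ℕ) : 0 < 1 - q * q ^ n := by
  have h1 : q * q ^ n ≤ q * 1 := by
    apply mul_le_mul_of_nonneg_left _ hq.le
    exact pow_le_one₀ hq.le hq1.le
  linarith

lemma ratio_tendsto {q : ℝ} (hq : 0 < q) (hq1 : q < 1) :
    Tendsto (fun n : ℕ => 1 - q * q ^ n) atTop (nhds 1) := by
  have h : Tendsto (fun n : ℕ => q ^ n) atTop (nhds 0) :=
    tendsto_pow_atTop_nhds_zero_of_lt_one hq.le hq1
  have := (tendsto_const_nhds (x := (1:ℝ))).sub ((tendsto_const_nhds (x := q)).mul h)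
  simpa using this

lemma summable_a' {q x : ℝ} (hq : 0 < q) (hq1 : q < 1) (hx : |x| < 1) :
    Summable (fun k : ℕ => x ^ k / qPoch q k) := by
  by_cases hx0 : x = 0
  · apply summable_of_ne_finset_zero (s := {0})
    intro b hb
    simp only [Finset.mem_singleton] at hb
    simp [hx0, zero_pow hb]
  · apply summable_of_ratio_test_tendsto_lt_one hx
    · filter_upwards with n
      exact div_ne_zero (pow_ne_zero n hx0) (qPoch_pos hq hq1 n).ne'
    · have key : ∀ n : ℕ, ‖x ^ (n+1) / qPoch q (n+1)‖ / ‖x ^ n / qPoch q n‖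
          = |x| / (1 - q * q ^ n) := by
        intro n
        have hp := qPoch_pos hq hq1 n
        have hf := qfac_pos hq hq1 n
        rw [qPoch_succ, pow_succ]
        simp only [Real.norm_eq_abs, abs_div, abs_mul, abs_pow, abs_of_pos hq,
          abs_of_pos hp, abs_of_pos hf]
        have h1 : |x| ^ n ≠ 0 := pow_ne_zero n (abs_ne_zero.mpr hx0)
        field_simp
      simp only [key]
      have := (tendsto_const_nhds (x := |x|)).div (ratio_tendsto hq hq1) (by norm_num)
      simpa [Pi.div_def] using this

lemma summable_a {q x : ℝ} (hq : 0 < q) (hq1 : q < 1) (hx : |x| < 1) :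
    Summable (fun k : ℕ => ‖x ^ k / qPoch q k‖) := by
  simpa only [Real.norm_eq_abs] using (summable_a' hq hq1 hx).abs

lemma tri_succ (n : ℕ) : (n + 1) * n / 2 = n * (n - 1) / 2 + n := by
  have h1 : ∑ i ∈ range (n+1), i = (n+1) * ((n+1) - 1) / 2 := Finset.sum_range_id (n+1)
  have h2 : ∑ i ∈ range n, i = n * (n - 1) / 2 := Finset.sum_range_id n
  have h3 : ∑ i ∈ range (n+1), i = (∑ i ∈ range n, i) + n := Finset.sum_range_succ _ _
  simp only [Nat.add_sub_cancel] at h1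
  omega

lemma summable_b' {q : ℝ} (y : ℝ) (hq : 0 < q) (hq1 : q < 1) :
    Summable (fun k : ℕ => q ^ (k * (k - 1) / 2) * y ^ k / qPoch q k) := by
  by_cases hy0 : y = 0
  · apply summable_of_ne_finset_zero (s := {0})
    intro b hb
    simp only [Finset.mem_singleton] at hb
    simp [hy0, zero_pow hb]
  · apply summable_of_ratio_test_tendsto_lt_one (l := 0) one_pos
    · filter_upwards with n
      have h1 := (qPoch_pos hq hq1 n).ne'
      have h2 : q ^ (n * (n - 1) / 2) ≠ 0 := by positivity
      exact div_ne_zero (mul_ne_zero h2 (pow_ne_zero n hy0)) h1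
    · have key : ∀ n : ℕ, ‖q ^ ((n+1) * ((n+1) - 1) / 2) * y ^ (n+1) / qPoch q (n+1)‖ /
          ‖q ^ (n * (n - 1) / 2) * y ^ n / qPoch q n‖
          = q ^ n * |y| / (1 - q * q ^ n) := by
        intro n
        have hp := qPoch_pos hq hq1 n
        have hf := qfac_pos hq hq1 n
        have hy : |y| ≠ 0 := abs_ne_zero.mpr hy0
        simp only [Nat.add_sub_cancel]
        rw [tri_succ, pow_add, qPoch_succ, pow_succ y]
        simp only [Real.norm_eq_abs, abs_div, abs_mul, abs_pow, abs_of_pos hq,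
          abs_of_pos hp, abs_of_pos hf]
        have h1 : |y| ^ n ≠ 0 := pow_ne_zero n hy
        have h2 : q ^ (n * (n-1)/2) ≠ 0 := by positivity
        field_simp
      simp only [key]
      have h0 : Tendsto (fun n : ℕ => q ^ n * |y|) atTop (nhds 0) := by
        have := (tendsto_pow_atTop_nhds_zero_of_lt_one hq.le hq1).mul_const |y|
        simpa using this
      have := h0.div (ratio_tendsto hq hq1) (by norm_num)
      simpa [Pi.div_def] using this

lemma summable_b {q : ℝ} (y : ℝ) (hq : 0 < q) (hq1 : q < 1) :
    Summable (fun k : ℕ => ‖q ^ (k * (k - 1) / 2) * y ^ k / qPoch q k‖) := by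
  simpa only [Real.norm_eq_abs] using (summable_b' y hq hq1).abs

theorem eq_Eq_hahn (q x y : ℝ) (hq : 0 < q) (hq1 : q < 1) (hx : |x| < 1) :
    (∑' k : ℕ, x ^ k / qPoch q k) *
      (∑' k : ℕ, q ^ (k * (k - 1) / 2) * y ^ k / qPoch q k) =
    ∑' n : ℕ, hahnAdd q x y n / qPoch q n := by
  rw [mul_comm, tsum_mul_tsum_eq_tsum_sum_range_of_summable_norm (summable_b y hq hq1)
    (summable_a hq hq1 hx)]
  apply tsum_congr
  intro n
  have hn := (qPoch_pos hq hq1 n).ne'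
  conv_rhs => rw [hahnAdd, mul_div_cancel_left₀ _ hn]
  apply Finset.sum_congr rfl
  intro k hk
  have h1 := (qPoch_pos hq hq1 k).ne'
  have h2 := (qPoch_pos hq hq1 (n - k)).ne'
  field_simp
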